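/- Let Σ_{n≥1} a_n/n < ∞ with a_n ≥ 0 and suppose a_n does not converge to 0. Then there exists C such that for infinitely many n, |a_{n+1} - a_n| > C/n. Equivalently (contrapositive form of Lemma 4.3): if a_n ≥ 0, Σ a_n/n < ∞, and limsup a_n > 0, then for every C > 0 there exist infinitely many n with |a_{n+1} - a_n| > C/n. -/

import Mathlib

open Filter

theorem stmt_18 (a : ℕ → ℝ) (ha : ∀ n, 0 ≤ a n)
    (hsum : Summable (fun n : ℕ => a n / n))
    (hnot : ¬ Tendsto a atTop (nhds 0)) :
    ∀ C : ℝ, 0 < C → {n : ℕ | C / n < |a (n + 1) - a n|}.Infinite := by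
  intro C hC
  by_contra hfin
  rw [Set.not_infinite] at hfin
  obtain ⟨N₀, hN₀⟩ : ∃ N₀ : ℕ, ∀ n, N₀ ≤ n → |a (n + 1) - a n| ≤ C / n := by
    obtain ⟨B, hB⟩ := hfin.bddAbove
    refine ⟨B + 1, fun n hn => le_of_not_gt fun h => ?_⟩
    have := hB (Set.mem_setOf.mpr h)
    omega
  obtain ⟨ε, hε, hfreq⟩ : ∃ ε > 0, ∀ N : ℕ, ∃ m, N ≤ m ∧ ε ≤ a m := by
    rw [Metric.tendsto_atTop] at hnot
    push_neg at hnot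
    obtain ⟨ε, hε, h⟩ := hnot
    refine ⟨ε, hε, fun N => ?_⟩
    obtain ⟨m, hm, hd⟩ := h N
    rw [Real.dist_eq, sub_zero, abs_of_nonneg (ha m)] at hd
    exact ⟨m, hm, hd⟩
  set δ := ε ^ 2 / (8 * C + 4 * ε) with hδdef
  have hδ : 0 < δ := by positivity
  obtain ⟨s, hs⟩ := summable_iff_vanishing.mp hsum (Set.Iio δ) (Iio_mem_nhds hδ)
  obtain ⟨m, hm, hma⟩ := hfreq (max (max N₀ (s.sup id + 1)) (max 1 ⌈4 * C / ε⌉₊))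
  have hm0 : 1 ≤ m := le_trans (le_trans (le_max_left 1 _) (le_max_right _ _)) hm
  have hmN₀ : N₀ ≤ m := le_trans (le_trans (le_max_left _ _) (le_max_left _ _)) hm
  have hms : s.sup id + 1 ≤ m := le_trans (le_trans (le_max_right _ _) (le_max_left _ _)) hm
  have hmceil : ⌈4 * C / ε⌉₊ ≤ m := le_trans (le_trans (le_max_right 1 _) (le_max_right _ _)) hm
  have hmpos : (0 : ℝ) < m := by exact_mod_cast hm0
  have hmC : 4 * C / ε ≤ (m : ℝ) := le_trans (Nat.le_ceil _) (by exact_mod_cast hmceil)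
  set L := ⌊ε * m / (2 * C)⌋₊ with hL
  have hL1 : (L : ℝ) ≤ ε * m / (2 * C) := Nat.floor_le (by positivity)
  have hL2 : ε * m / (2 * C) < (L : ℝ) + 1 := Nat.lt_floor_add_one _
  have h2q : 2 ≤ ε * m / (2 * C) := by
    rw [le_div_iff₀ (by positivity)]
    rw [div_le_iff₀ hε] at hmC
    nlinarith
  have hL3 : ε * m / (4 * C) ≤ (L : ℝ) := by
    have hq : ε * m / (4 * C) = (ε * m / (2 * C)) / 2 := by ring
    rw [hq]; linarith
  -- a stays above ε/2 on the block [m, m+L]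
  have key : ∀ j : ℕ, j ≤ L → ε - C * j / m ≤ a (m + j) := by
    intro j
    induction j with
    | zero => intro _; simpa using hma
    | succ j ih =>
      intro hj
      have h1 := ih (Nat.le_of_succ_le hj)
      have h2 := hN₀ (m + j) (le_trans hmN₀ (Nat.le_add_right m j))
      push_cast at h2
      have h3 : -(C / ((m : ℝ) + j)) ≤ a (m + j + 1) - a (m + j) := (abs_le.mp h2).1
      have h4 : C / ((m : ℝ) + j) ≤ C / m := by
        apply div_le_div_of_nonneg_left hC.le hmpos
        have : (0 : ℝ) ≤ (j : ℕ) := by positivity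
        linarith [Nat.cast_nonneg (α := ℝ) j]
      have hgoal : a (m + (j + 1)) = a (m + j + 1) := by ring_nf
      rw [hgoal]
      push_cast
      have hmne : (m : ℝ) ≠ 0 := ne_of_gt hmpos
      have : C * ((j : ℝ) + 1) / m = C * j / m + C / m := by field_simp
      linarith
  have hlow : ∀ k ∈ Finset.Icc m (m + L), ε / 2 ≤ a k := by
    intro k hk
    rw [Finset.mem_Icc] at hk
    obtain ⟨j, rfl⟩ := Nat.exists_eq_add_of_le hk.1
    have hjL : j ≤ L := by omega
    have hkey := key j hjL
    have hjc : (j : ℝ) ≤ (L : ℝ) := by exact_mod_cast hjL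
    have hCj : C * j / m ≤ ε / 2 := by
      rw [div_le_iff₀ hmpos]
      have hL1' : (L : ℝ) * (2 * C) ≤ ε * m := (le_div_iff₀ (by positivity)).mp hL1
      nlinarith
    linarith
  -- lower bound on the block sum
  have hcard : (Finset.Icc m (m + L)).card = L + 1 := by
    rw [Nat.card_Icc]; omega
  have hsumlow : δ ≤ ∑ k ∈ Finset.Icc m (m + L), a k / k := by
    have step : ∀ k ∈ Finset.Icc m (m + L), ε / 2 / ((m : ℝ) + L) ≤ a k / k := by
      intro k hk
      have hk' := Finset.mem_Icc.mp hk
      have hkpos : (0 : ℝ) < k := by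
        have : 1 ≤ k := le_trans hm0 hk'.1
        exact_mod_cast this
      have hkle : (k : ℝ) ≤ (m : ℝ) + L := by exact_mod_cast hk'.2
      exact div_le_div₀ (ha k) (hlow k hk) hkpos hkle
    calc δ ≤ (Finset.Icc m (m + L)).card • (ε / 2 / ((m : ℝ) + L)) := by
            rw [hcard, nsmul_eq_mul]
            push_cast
            have heq : ((L : ℝ) + 1) * (ε / 2 / ((m : ℝ) + L)) =
                ((L : ℝ) + 1) * (ε / 2) / ((m : ℝ) + L) := by ring
            rw [heq, hδdef, div_le_div_iff₀ (by positivity) (by positivity)]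
            rw [div_le_iff₀ (by positivity : (0 : ℝ) < 4 * C)] at hL3
            have hL1' : (L : ℝ) * (2 * C) ≤ ε * m := (le_div_iff₀ (by positivity)).mp hL1
            nlinarith [Nat.cast_nonneg (α := ℝ) L, hε.le, sq_nonneg ε]
      _ ≤ ∑ k ∈ Finset.Icc m (m + L), a k / k := Finset.card_nsmul_le_sum _ _ _ step
  have hdisj : Disjoint (Finset.Icc m (m + L)) s := by
    rw [Finset.disjoint_left]
    intro k hk hks
    have h1 := (Finset.mem_Icc.mp hk).1
    have h2 : k ≤ s.sup id := Finset.le_sup (f := id) hks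
    omega
  have hlt := hs _ hdisj
  rw [Set.mem_Iio] at hlt
  linarith
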